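/- Let m ≥ 1 be an integer and λ ∈ ℂ lie on the circle |λ - j^{2m}| = (1/2) j^{2m-1} for some integer j ≥ 3. Then ∑_{n=1}^{j-2} 1/|λ - n^{2m}| ≤ ∫_0^{j-2} dt/((j-1)^{2m} - t^{2m}) ≤ (j-1)^{1-2m} ln(j-1). -/

import Mathlib

open Real MeasureTheory Finset

lemma aux_sum_upper (a b : ℝ) (hb : 0 ≤ b) (hab : b ≤ a) (k : ℕ) :
    ∑ i ∈ range k, a ^ i * b ^ (k - 1 - i) ≤ (k : ℝ) * a ^ (k - 1) := by
  have ha : 0 ≤ a := hb.trans hab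
  calc ∑ i ∈ range k, a ^ i * b ^ (k - 1 - i)
      ≤ ∑ _i ∈ range k, a ^ (k - 1) := by
        refine Finset.sum_le_sum fun i hi => ?_
        have hik : i < k := mem_range.mp hi
        calc a ^ i * b ^ (k - 1 - i) ≤ a ^ i * a ^ (k - 1 - i) := by
              have := pow_le_pow_left₀ hb hab (k - 1 - i)
              exact mul_le_mul_of_nonneg_left this (pow_nonneg ha i)
          _ = a ^ (k - 1) := by rw [← pow_add]; congr 1; omega
    _ = (k : ℝ) * a ^ (k - 1) := by rw [Finset.sum_const, card_range, nsmul_eq_mul]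

lemma aux_sum_lower (a b : ℝ) (hb : 0 ≤ b) (hab : b ≤ a) (k : ℕ) (hk : 1 ≤ k) :
    ((k : ℝ) - 1) * b ^ (k - 1) + a ^ (k - 1) ≤ ∑ i ∈ range k, a ^ i * b ^ (k - 1 - i) := by
  have ha : 0 ≤ a := hb.trans hab
  obtain ⟨k, rfl⟩ : ∃ k', k = k' + 1 := ⟨k - 1, by omega⟩
  rw [Finset.sum_range_succ]
  have h1 : ∀ i ∈ range k, b ^ k ≤ a ^ i * b ^ (k + 1 - 1 - i) := by
    intro i hi
    have hik : i < k := mem_range.mp hi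
    have : b ^ k = b ^ i * b ^ (k + 1 - 1 - i) := by rw [← pow_add]; congr 1; omega
    rw [this]
    exact mul_le_mul_of_nonneg_right (pow_le_pow_left₀ hb hab i) (pow_nonneg hb _)
  have h2 : (k : ℝ) * b ^ k ≤ ∑ i ∈ range k, a ^ i * b ^ (k + 1 - 1 - i) := by
    calc (k : ℝ) * b ^ k = ∑ _i ∈ range k, b ^ k := by
          rw [Finset.sum_const, card_range, nsmul_eq_mul]
      _ ≤ _ := Finset.sum_le_sum h1
  have h3 : a ^ (k + 1 - 1) * b ^ (k + 1 - 1 - k) = a ^ k := by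
    simp
  push_cast
  simp only [Nat.add_sub_cancel] at *
  nlinarith [h2]

lemma pow_sub_pow_upper (a b : ℝ) (hb : 0 ≤ b) (hab : b ≤ a) (k : ℕ) :
    a ^ k - b ^ k ≤ (k : ℝ) * a ^ (k - 1) * (a - b) := by
  rw [← geom_sum₂_mul a b k]
  exact mul_le_mul_of_nonneg_right (aux_sum_upper a b hb hab k) (by linarith)

lemma pow_sub_pow_lower (a b : ℝ) (hb : 0 ≤ b) (hab : b ≤ a) (k : ℕ) (hk : 1 ≤ k) :
    (((k : ℝ) - 1) * b ^ (k - 1) + a ^ (k - 1)) * (a - b) ≤ a ^ k - b ^ k := by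
  rw [← geom_sum₂_mul a b k]
  exact mul_le_mul_of_nonneg_right (aux_sum_lower a b hb hab k hk) (by linarith)

lemma pow_sub_pow_lower' (a b : ℝ) (hb : 0 ≤ b) (hab : b ≤ a) (k : ℕ) (hk : 1 ≤ k) :
    a ^ (k - 1) * (a - b) ≤ a ^ k - b ^ k := by
  have h := pow_sub_pow_lower a b hb hab k hk
  have hk' : (1:ℝ) ≤ (k:ℝ) := by exact_mod_cast hk
  have h2 : 0 ≤ ((k:ℝ) - 1) * b ^ (k-1) * (a - b) :=
    mul_nonneg (mul_nonneg (by linarith) (pow_nonneg hb _)) (by linarith)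
  nlinarith [h, h2]

lemma amhm {a b c : ℝ} (ha : 0 < a) (hb : 0 < b) (hc : 0 < c) (h : a + b ≤ 2 * c) :
    2 / c ≤ 1 / a + 1 / b := by
  rw [div_add_div _ _ (ne_of_gt ha) (ne_of_gt hb), div_le_div_iff₀ hc (by positivity)]
  nlinarith [sq_nonneg (a - b), mul_le_mul_of_nonneg_left h (add_pos ha hb).le]

set_option maxHeartbeats 1000000 in
theorem stmt_7 (m j : ℕ) (hm : 1 ≤ m) (hj : 3 ≤ j) (lam : ℂ)
    (hlam : ‖lam - (j : ℂ) ^ (2 * m)‖ = (1 / 2) * (j : ℝ) ^ (2 * m - 1)) :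
    ∑ n ∈ Finset.Icc 1 (j - 2), 1 / ‖lam - (n : ℂ) ^ (2 * m)‖
        ≤ ∫ t in (0:ℝ)..((j : ℝ) - 2), 1 / (((j : ℝ) - 1) ^ (2 * m) - t ^ (2 * m)) ∧
      ∫ t in (0:ℝ)..((j : ℝ) - 2), 1 / (((j : ℝ) - 1) ^ (2 * m) - t ^ (2 * m))
        ≤ ((j : ℝ) - 1) ^ ((1 : ℝ) - 2 * m) * Real.log ((j : ℝ) - 1) := by
  have hx : (3:ℝ) ≤ (j:ℝ) := by exact_mod_cast hj
  obtain ⟨f, hf⟩ : ∃ f : ℝ → ℝ, f = fun t => 1 / (((j : ℝ) - 1) ^ (2 * m) - t ^ (2 * m)) :=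
    ⟨_, rfl⟩
  have hdenom : ∀ t : ℝ, 0 ≤ t → t ≤ (j:ℝ) - 2 → 0 < ((j:ℝ)-1)^(2*m) - t^(2*m) := by
    intro t ht ht2
    have : t ^ (2*m) < ((j:ℝ)-1) ^ (2*m) :=
      pow_lt_pow_left₀ (by linarith) ht (by omega)
    linarith
  have hfc : ContinuousOn f (Set.Icc 0 ((j:ℝ) - 2)) := by
    rw [hf]
    apply ContinuousOn.div continuousOn_const
    · exact (continuous_const.sub (continuous_pow (2*m))).continuousOn
    · intro t ht; exact ne_of_gt (hdenom t ht.1 ht.2)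
  have hint : ∀ a b : ℝ, 0 ≤ a → b ≤ (j:ℝ)-2 → a ≤ b →
      IntervalIntegrable f volume a b := by
    intro a b ha hb hab
    apply (hfc.mono ?_).intervalIntegrable
    rw [Set.uIcc_of_le hab]; exact Set.Icc_subset_Icc ha hb
  -- per-term bound
  have key : ∀ n ∈ Finset.Icc 1 (j - 2),
      1 / ‖lam - (n : ℂ) ^ (2*m)‖ ≤ ∫ t in ((n:ℝ) - 1)..(n:ℝ), f t := by
    intro n hn
    obtain ⟨hn1, hn2⟩ := Finset.mem_Icc.mp hn
    have hN1 : (1:ℝ) ≤ (n:ℝ) := by exact_mod_cast hn1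
    have hN2 : (n:ℝ) ≤ (j:ℝ) - 2 := by
      have h' : n + 2 ≤ j := by omega
      have := (Nat.cast_le (α := ℝ)).mpr h'
      push_cast at this; linarith
    set N := (n:ℝ) with hNdef
    -- Step A: triangle inequality
    have habs : ((j:ℝ)^(2*m) - N^(2*m)) - 1/2 * (j:ℝ)^(2*m-1)
        ≤ ‖lam - (n:ℂ)^(2*m)‖ := by
      have tri : ‖(j:ℂ)^(2*m) - (n:ℂ)^(2*m)‖
          ≤ ‖(j:ℂ)^(2*m) - lam‖ + ‖lam - (n:ℂ)^(2*m)‖ :=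
        norm_sub_le_norm_sub_add_norm_sub _ _ _
      have h1 : ‖(j:ℂ)^(2*m) - lam‖ = 1/2 * (j:ℝ)^(2*m-1) := by
        rw [← norm_neg, neg_sub]; exact hlam
      have h2 : ‖(j:ℂ)^(2*m) - (n:ℂ)^(2*m)‖ = (j:ℝ)^(2*m) - N^(2*m) := by
        have he : ((j:ℂ)^(2*m) - (n:ℂ)^(2*m)) = (((j:ℝ)^(2*m) - N^(2*m) : ℝ) : ℂ) := by
          rw [hNdef]; push_cast; ring
        rw [he, Complex.norm_real, Real.norm_eq_abs, abs_of_nonneg]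
        have : N ^ (2*m) ≤ (j:ℝ)^(2*m) := pow_le_pow_left₀ (by linarith) (by linarith) _
        linarith
      rw [h1, h2] at tri
      linarith
    -- Step B: the key algebraic inequality
    have hstar : ((j:ℝ)-1)^(2*m) - (N - 1/2)^(2*m)
        ≤ (j:ℝ)^(2*m) - N^(2*m) - 1/2 * (j:ℝ)^(2*m-1) := by
      have hmR : (1:ℝ) ≤ (m:ℝ) := by exact_mod_cast hm
      have hA := pow_sub_pow_lower (j:ℝ) ((j:ℝ)-1) (by linarith) (by linarith) (2*m) (by omega)
      have hB := pow_sub_pow_upper N (N - 1/2) (by linarith) (by linarith) (2*m)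
      have hcast : ((2*m : ℕ) : ℝ) = 2 * (m:ℝ) := by push_cast; ring
      rw [hcast] at hA hB
      have hR : N^(2*m-1) ≤ ((j:ℝ)-1)^(2*m-1) := pow_le_pow_left₀ (by linarith) (by linarith) _
      have hQ : (0:ℝ) ≤ ((j:ℝ)-1)^(2*m-1) := pow_nonneg (by linarith) _
      have hP : (0:ℝ) ≤ (j:ℝ)^(2*m-1) := pow_nonneg (by linarith) _
      have hmRmul : (m:ℝ) * N^(2*m-1) ≤ (m:ℝ) * ((j:ℝ)-1)^(2*m-1) :=
        mul_le_mul_of_nonneg_left hR (by positivity)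
      have hmQ : 0 ≤ ((m:ℝ) - 1) * ((j:ℝ)-1)^(2*m-1) := mul_nonneg (by linarith) hQ
      nlinarith [hA, hB, hmRmul, hmQ, hP]
    have hpos : 0 < ((j:ℝ)-1)^(2*m) - (N - 1/2)^(2*m) := by
      have : (N - 1/2) ^ (2*m) < ((j:ℝ)-1) ^ (2*m) :=
        pow_lt_pow_left₀ (by linarith) (by linarith) (by omega)
      linarith
    have step1 : 1 / ‖lam - (n:ℂ)^(2*m)‖ ≤ f (N - 1/2) := by
      have h0 := one_div_le_one_div_of_le hpos (hstar.trans habs)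
      rw [hf]; simpa using h0
    -- Step C : midpoint value ≤ average (Hermite-Hadamard via reflection)
    have hmid : f (N - 1/2) ≤ ∫ t in (N-1)..N, f t := by
      have hI1 : IntervalIntegrable f volume (N-1) (N-1/2) :=
        hint _ _ (by linarith) (by linarith) (by linarith)
      have hI3 : IntervalIntegrable f volume (N-1/2) N :=
        hint _ _ (by linarith) (by linarith) (by linarith)
      have hI2 : IntervalIntegrable (fun t => f (2*N-1 - t)) volume (N-1) (N-1/2) := by
        have := hI3.comp_sub_left (2*N-1)
        have e1 : 2*N-1 - (N-1/2) = N - 1/2 := by ring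
        have e2 : 2*N-1 - N = N - 1 := by ring
        rw [e1, e2] at this
        exact this.symm
      have hpt : ∀ t ∈ Set.Icc (N-1) (N-1/2), 2 * f (N-1/2) ≤ f t + f (2*N-1-t) := by
        intro t ht
        obtain ⟨ht1, ht2⟩ := ht
        have hden1 : 0 < ((j:ℝ)-1)^(2*m) - t^(2*m) := hdenom t (by linarith) (by linarith)
        have hden2 : 0 < ((j:ℝ)-1)^(2*m) - (2*N-1-t)^(2*m) :=
          hdenom _ (by linarith) (by linarith)
        have hdenc : 0 < ((j:ℝ)-1)^(2*m) - (N-1/2)^(2*m) :=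
          hdenom _ (by linarith) (by linarith)
        have hconv := (Even.convexOn_pow (even_two_mul m)).2 (Set.mem_univ t)
          (Set.mem_univ (2*N-1-t)) (by norm_num : (0:ℝ) ≤ 1/2) (by norm_num : (0:ℝ) ≤ 1/2)
          (by norm_num : (1:ℝ)/2 + 1/2 = 1)
        simp only [smul_eq_mul] at hconv
        rw [show (1:ℝ)/2 * t + 1/2 * (2*N-1-t) = N - 1/2 by ring] at hconv
        have hsum : (((j:ℝ)-1)^(2*m) - t^(2*m)) + (((j:ℝ)-1)^(2*m) - (2*N-1-t)^(2*m))
            ≤ 2 * (((j:ℝ)-1)^(2*m) - (N-1/2)^(2*m)) := by linarith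
        have := amhm hden1 hden2 hdenc hsum
        simp only [hf]
        calc 2 * (1 / (((j:ℝ)-1)^(2*m) - (N-1/2)^(2*m)))
            = 2 / (((j:ℝ)-1)^(2*m) - (N-1/2)^(2*m)) := by ring
          _ ≤ _ := this
      calc f (N - 1/2) = ∫ _t in (N-1)..(N-1/2), 2 * f (N - 1/2) := by
            rw [intervalIntegral.integral_const]
            rw [show N - 1/2 - (N-1) = 1/2 by ring, smul_eq_mul]; ring
        _ ≤ ∫ t in (N-1)..(N-1/2), (f t + f (2*N-1-t)) :=
            intervalIntegral.integral_mono_on (by linarith) intervalIntegrable_const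
              (hI1.add hI2) hpt
        _ = (∫ t in (N-1)..(N-1/2), f t) + ∫ t in (N-1)..(N-1/2), f (2*N-1-t) :=
            intervalIntegral.integral_add hI1 hI2
        _ = (∫ t in (N-1)..(N-1/2), f t) + ∫ t in (N-1/2)..N, f t := by
            rw [intervalIntegral.integral_comp_sub_left f (2*N-1)]
            congr 1 <;> ring
        _ = ∫ t in (N-1)..N, f t := intervalIntegral.integral_add_adjacent_intervals hI1 hI3
    exact step1.trans hmid
  -- summing the adjacent intervals
  have hcast : ((j - 2 : ℕ) : ℝ) = (j:ℝ) - 2 := by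
    have : ((j - 2 : ℕ) : ℝ) = (j:ℝ) - (2:ℕ) := Nat.cast_sub (by omega)
    simpa using this
  have hsum2 : ∑ n ∈ Finset.Icc 1 (j-2), ∫ t in ((n:ℝ) - 1)..(n:ℝ), f t
      = ∫ t in (0:ℝ)..((j:ℝ)-2), f t := by
    have hadj := intervalIntegral.sum_integral_adjacent_intervals
      (a := fun i : ℕ => (i:ℝ)) (n := j-2) (f := f) (μ := volume) ?_
    · rw [Nat.cast_zero, hcast] at hadj
      rw [← hadj]
      rw [← Finset.Ico_add_one_right_eq_Icc, Finset.sum_Ico_eq_sum_range]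
      apply Finset.sum_congr (by norm_num)
      intro i _
      push_cast
      congr 1 <;> ring
    · intro i hi
      have hi' : (i:ℝ) + 1 ≤ (j:ℝ) - 2 := by
        have : (i:ℕ) + 1 ≤ j - 2 := by omega
        have := (Nat.cast_le (α := ℝ)).mpr this
        push_cast at this; linarith [hcast ▸ this]
      exact hint _ _ (by positivity) (by push_cast; linarith) (by push_cast; linarith)
  have hpart1 : ∑ n ∈ Finset.Icc 1 (j - 2), 1 / ‖lam - (n : ℂ) ^ (2 * m)‖
      ≤ ∫ t in (0:ℝ)..((j:ℝ)-2), f t := by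
    calc ∑ n ∈ Finset.Icc 1 (j - 2), 1 / ‖lam - (n : ℂ) ^ (2 * m)‖
        ≤ ∑ n ∈ Finset.Icc 1 (j-2), ∫ t in ((n:ℝ) - 1)..(n:ℝ), f t := Finset.sum_le_sum key
      _ = _ := hsum2
  -- Part 2
  have hpart2 : (∫ t in (0:ℝ)..((j:ℝ)-2), f t)
      ≤ ((j:ℝ)-1) ^ ((1:ℝ) - 2*m) * Real.log ((j:ℝ)-1) := by
    set g : ℝ → ℝ := fun t => (((j:ℝ)-1)^(2*m-1))⁻¹ * ((j:ℝ)-1-t)⁻¹ with hg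
    have hQpos : (0:ℝ) < ((j:ℝ)-1)^(2*m-1) := pow_pos (by linarith) _
    have hgc : ContinuousOn g (Set.Icc 0 ((j:ℝ) - 2)) := by
      apply ContinuousOn.mul continuousOn_const
      apply ContinuousOn.inv₀ (continuous_const.sub continuous_id).continuousOn
      intro t ht
      have := ht.2
      intro h; simp only [Pi.sub_apply, id] at h; nlinarith [this]
    have hIg : IntervalIntegrable g volume 0 ((j:ℝ)-2) := by
      apply (hgc.mono ?_).intervalIntegrable
      rw [Set.uIcc_of_le (by linarith)]
    have hmono : ∀ t ∈ Set.Icc (0:ℝ) ((j:ℝ)-2), f t ≤ g t := by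
      intro t ht
      obtain ⟨ht0, ht1⟩ := ht
      have hlow := pow_sub_pow_lower' ((j:ℝ)-1) t ht0 (by linarith) (2*m) (by omega)
      have hd := hdenom t ht0 ht1
      have hgpos : 0 < ((j:ℝ)-1)^(2*m-1) * ((j:ℝ)-1-t) := by
        apply mul_pos hQpos; linarith
      have h1 : 1/(((j:ℝ)-1)^(2*m) - t^(2*m)) ≤ 1/(((j:ℝ)-1)^(2*m-1) * ((j:ℝ)-1-t)) :=
        one_div_le_one_div_of_le hgpos hlow
      calc f t = 1/(((j:ℝ)-1)^(2*m) - t^(2*m)) := by rw [hf]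
        _ ≤ 1/(((j:ℝ)-1)^(2*m-1) * ((j:ℝ)-1-t)) := h1
        _ = g t := by rw [hg, one_div, mul_inv]
    have hImono : (∫ t in (0:ℝ)..((j:ℝ)-2), f t) ≤ ∫ t in (0:ℝ)..((j:ℝ)-2), g t :=
      intervalIntegral.integral_mono_on (by linarith)
        (hint _ _ le_rfl le_rfl (by linarith)) hIg hmono
    have hcalc : (∫ t in (0:ℝ)..((j:ℝ)-2), g t)
        = (((j:ℝ)-1)^(2*m-1))⁻¹ * Real.log ((j:ℝ)-1) := by
      rw [hg]
      rw [intervalIntegral.integral_const_mul]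
      congr 1
      have hc := intervalIntegral.integral_comp_sub_left (a := (0:ℝ)) (b := (j:ℝ)-2)
        (fun u : ℝ => u⁻¹) ((j:ℝ)-1)
      rw [hc, show (j:ℝ)-1-((j:ℝ)-2) = 1 by ring, sub_zero]
      rw [integral_inv (by rw [Set.uIcc_of_le (by linarith)]; intro h; simp at h; linarith [h.1])]
      rw [div_one]
    have hrpow : ((j:ℝ)-1) ^ ((1:ℝ) - 2*m) = (((j:ℝ)-1)^(2*m-1))⁻¹ := by
      have h1 : ((1:ℝ) - 2*m) = -(((2*m-1 : ℕ) : ℝ)) := by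
        have : ((2*m-1 : ℕ) : ℝ) = 2*(m:ℝ) - 1 := by
          have := Nat.cast_sub (R := ℝ) (show 1 ≤ 2*m by omega)
          push_cast at this ⊢; linarith
        rw [this]; ring
      rw [h1, Real.rpow_neg (by linarith), Real.rpow_natCast]
    rw [hrpow]
    calc (∫ t in (0:ℝ)..((j:ℝ)-2), f t) ≤ _ := hImono
      _ = _ := hcalc
  constructor
  · simp only [hf] at hpart1; exact hpart1
  · simp only [hf] at hpart2; exact hpart2
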